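/- Suppose f satisfies conditions (i), (ii) and (iii). Let F : C(Ω̄) → L^p(Ω) be the superposition operator (F(u))(x) = f(x, u(x)) and, for u ∈ C(Ω̄), let L(u) : C(Ω̄) → L^p(Ω) be the bounded linear operator (L(u)v)(x) := ∂_u f(x, u(x)) v(x). Then F is Fréchet differentiable at every u ∈ C(Ω̄) with Fréchet derivative F'(u) = L(u); that is, ‖F(u+v) − F(u) − L(u)v‖_{L^p(Ω)} / ‖v‖_∞ → 0 as ‖v‖_∞ → 0. -/

import Mathlib

open MeasureTheory ENNReal Classical

/-- The extension by zero of a continuous function on `closure Ω` to the whole space. -/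
noncomputable def extendC {N : ℕ} (Ω : Set (Fin N → ℝ)) (u : C(closure Ω, ℝ)) :
    (Fin N → ℝ) → ℝ :=
  fun x => if hx : x ∈ closure Ω then u ⟨x, hx⟩ else 0

/-- Under conditions (i), (ii) and (iii), the superposition operator
`F : C(Ω̄) → L^p(Ω)`, `(F(u))(x) = f(x, u(x))`, is Fréchet differentiable at every
`u ∈ C(Ω̄)` with derivative `F'(u) = L(u)`, where `(L(u)v)(x) = ∂_u f(x, u(x)) v(x)`. -/
theorem superposition_hasFDerivAt
    {N : ℕ} (Ω : Set (Fin N → ℝ)) (hΩo : IsOpen Ω) (hΩb : Bornology.IsBounded Ω)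
    [CompactSpace (closure Ω)]
    (f f' : (Fin N → ℝ) → ℝ → ℝ) (p : ℝ≥0∞) (hp : 2 ≤ p) [Fact (1 ≤ p)]
    -- (i): a.e. differentiability in `u`, measurability in `x`
    (hdiff : ∀ᵐ x ∂(volume.restrict Ω), ∀ y : ℝ, HasDerivAt (f x) (f' x y) y)
    (hmeas : ∀ y : ℝ, AEMeasurable (fun x => f x y) (volume.restrict Ω))
    -- (ii) and (iii): local `L^p` domination and uniform continuity relative to `g_K`
    (hbound : ∀ K : Set ℝ, IsCompact K → ∃ g : (Fin N → ℝ) → ℝ,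
      MemLp g p (volume.restrict Ω) ∧
      (∀ᵐ x ∂(volume.restrict Ω), ∀ y ∈ K, |f x y| + |f' x y| ≤ g x) ∧
      (∀ ε > (0:ℝ), ∃ δ > (0:ℝ), ∀ᵐ x ∂(volume.restrict Ω), ∀ y ∈ K, ∀ z ∈ K,
        |y - z| ≤ δ → |f x y - f x z| + |f' x y - f' x z| ≤ ε * g x))
    -- the superposition operator `F`
    (F : C(closure Ω, ℝ) → Lp ℝ p (volume.restrict Ω))
    (hF : ∀ u : C(closure Ω, ℝ),
      ⇑(F u) =ᵐ[volume.restrict Ω] fun x => f x (extendC Ω u x))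
    -- the candidate derivative `L`
    (L : C(closure Ω, ℝ) → (C(closure Ω, ℝ) →L[ℝ] Lp ℝ p (volume.restrict Ω)))
    (hL : ∀ u v : C(closure Ω, ℝ),
      ⇑(L u v) =ᵐ[volume.restrict Ω]
        fun x => f' x (extendC Ω u x) * extendC Ω v x) :
    ∀ u : C(closure Ω, ℝ), HasFDerivAt F (L u) u := by
  intro u
  obtain ⟨g, hg, hdom, hcont⟩ :=
    hbound (Set.Icc (-(‖u‖ + 1)) (‖u‖ + 1)) isCompact_Icc
  rw [hasFDerivAt_iff_isLittleO_nhds_zero, Asymptotics.isLittleO_iff]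
  intro c hc
  set G := (eLpNorm g p (volume.restrict Ω)).toReal with hGdef
  have hG0 : 0 ≤ G := ENNReal.toReal_nonneg
  set ε := c / (G + 1) with hεdef
  have hε0 : 0 < ε := div_pos hc (by linarith)
  obtain ⟨δ, hδ0, hδ⟩ := hcont ε hε0
  have hmem : Metric.ball (0 : C(closure Ω, ℝ)) (min δ 1) ∈
      nhds (0 : C(closure Ω, ℝ)) := Metric.ball_mem_nhds _ (lt_min hδ0 one_pos)
  filter_upwards [hmem] with v hv
  rw [mem_ball_zero_iff] at hv
  have hvδ : ‖v‖ ≤ δ := (lt_of_lt_of_le hv (min_le_left _ _)).le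
  have hv1 : ‖v‖ ≤ 1 := (lt_of_lt_of_le hv (min_le_right _ _)).le
  set X := F (u + v) - F u - (L u) v with hXdef
  -- pointwise a.e. bound
  have hae : ∀ᵐ x ∂(volume.restrict Ω),
      ‖(X : (Fin N → ℝ) → ℝ) x‖ ≤ ‖(ε * ‖v‖) * g x‖ := by
    filter_upwards [Lp.coeFn_sub (F (u + v)) (F u),
      Lp.coeFn_sub (F (u + v) - F u) ((L u) v), hF (u + v), hF u, hL u v,
      hdiff, hδ, ae_restrict_mem hΩo.measurableSet] with x hs1 hs2 hFuv hFu
      hLuv hd hδx hxΩ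
    have hcx : x ∈ closure Ω := subset_closure hxΩ
    set a := extendC Ω u x with hadef
    set b := extendC Ω v x with hbdef
    have hax : |a| ≤ ‖u‖ := by
      rw [hadef]; simp only [extendC, dif_pos hcx]
      simpa using u.norm_coe_le_norm ⟨x, hcx⟩
    have hbx : |b| ≤ ‖v‖ := by
      rw [hbdef]; simp only [extendC, dif_pos hcx]
      simpa using v.norm_coe_le_norm ⟨x, hcx⟩
    have hext : extendC Ω (u + v) x = a + b := by
      rw [hadef, hbdef]; simp [extendC, dif_pos hcx]
    have hKa : a ∈ Set.Icc (-(‖u‖ + 1)) (‖u‖ + 1) := by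
      have := abs_le.mp hax; constructor <;> linarith [this.1, this.2]
    have hKab : a + b ∈ Set.Icc (-(‖u‖ + 1)) (‖u‖ + 1) := by
      have h1 := abs_le.mp hax
      have h2 := abs_le.mp hbx
      constructor <;> linarith [h1.1, h1.2, h2.1, h2.2]
    have hg0 : 0 ≤ ε * g x := by
      have := hδx a hKa a hKa (by simp [hδ0.le])
      simpa using this
    -- mean value estimate
    have hsub : ∀ t ∈ Set.uIcc a (a + b),
        t ∈ Set.Icc (-(‖u‖ + 1)) (‖u‖ + 1) ∧ |t - a| ≤ |b| := by
      intro t ht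
      have h1 := abs_le.mp hax
      have h2 := abs_le.mp hbx
      have hb1 : |b| ≤ 1 := le_trans hbx hv1
      rcases Set.mem_uIcc.mp ht with ⟨hl, hr⟩ | ⟨hl, hr⟩ <;>
        refine ⟨⟨by linarith [le_abs_self b, neg_abs_le b],
          by linarith [le_abs_self b, neg_abs_le b]⟩, ?_⟩ <;>
        rw [abs_le] <;>
        constructor <;> linarith [le_abs_self b, neg_abs_le b]
    have hbd : ∀ t ∈ Set.uIcc a (a + b), ‖f' x t - f' x a‖ ≤ ε * g x := by
      intro t ht
      obtain ⟨htK, htd⟩ := hsub t ht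
      have h := hδx t htK a hKa (le_trans htd (le_trans hbx hvδ))
      rw [Real.norm_eq_abs]
      have h2 := abs_nonneg (f x t - f x a)
      linarith
    have hφ : ∀ t ∈ Set.uIcc a (a + b),
        HasDerivWithinAt (fun t => f x t - t * f' x a) (f' x t - f' x a)
          (Set.uIcc a (a + b)) t :=
      fun t _ => ((hd t).sub (hasDerivAt_mul_const (f' x a))).hasDerivWithinAt
    have key := (convex_uIcc a (a + b)).norm_image_sub_le_of_norm_hasDerivWithin_le
      hφ hbd Set.left_mem_uIcc Set.right_mem_uIcc
    have e2 : a + b - a = b := by ring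
    rw [e2, Real.norm_eq_abs, Real.norm_eq_abs] at key
    have key' : |f x (a + b) - f x a - f' x a * b| ≤ ε * g x * |b| := by
      have e1 : f x (a + b) - f x a - f' x a * b =
          (f x (a + b) - (a + b) * f' x a) - (f x a - a * f' x a) := by ring
      rw [e1]; exact key
    have hXx : (X : (Fin N → ℝ) → ℝ) x =
        f x (a + b) - f x a - f' x a * b := by
      rw [hXdef, hs2]; simp only [Pi.sub_apply]
      rw [hs1]; simp only [Pi.sub_apply]
      rw [hFuv, hFu, hLuv, hext]
    rw [hXx, Real.norm_eq_abs, Real.norm_eq_abs]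
    calc |f x (a + b) - f x a - f' x a * b| ≤ ε * g x * |b| := key'
      _ ≤ ε * ‖v‖ * g x := by nlinarith [norm_nonneg v, abs_nonneg b]
      _ ≤ |ε * ‖v‖ * g x| := le_abs_self _
  -- conclude via the Lp norm
  have hfin : ((‖ε * ‖v‖‖₊ : ℝ≥0∞) * eLpNorm g p (volume.restrict Ω)) ≠ ∞ :=
    ENNReal.mul_ne_top ENNReal.coe_ne_top hg.eLpNorm_ne_top
  have hle : eLpNorm (X : (Fin N → ℝ) → ℝ) p (volume.restrict Ω) ≤
      (‖ε * ‖v‖‖₊ : ℝ≥0∞) * eLpNorm g p (volume.restrict Ω) := by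
    calc eLpNorm (X : (Fin N → ℝ) → ℝ) p (volume.restrict Ω)
        ≤ eLpNorm (fun x => (ε * ‖v‖) * g x) p (volume.restrict Ω) :=
          eLpNorm_mono_ae hae
      _ = (‖ε * ‖v‖‖₊ : ℝ≥0∞) * eLpNorm g p (volume.restrict Ω) := by
          rw [show (fun x => (ε * ‖v‖) * g x) = (ε * ‖v‖) • g from rfl,
            eLpNorm_const_smul, enorm_eq_nnnorm]
  have hnn : (0 : ℝ) ≤ ε * ‖v‖ := mul_nonneg hε0.le (norm_nonneg v)
  have hεG : ε * G ≤ c := by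
    rw [hεdef, div_mul_eq_mul_div, div_le_iff₀ (by linarith : (0:ℝ) < G + 1)]
    nlinarith
  calc ‖X‖ = (eLpNorm (X : (Fin N → ℝ) → ℝ) p (volume.restrict Ω)).toReal :=
        Lp.norm_def X
    _ ≤ ((‖ε * ‖v‖‖₊ : ℝ≥0∞) * eLpNorm g p (volume.restrict Ω)).toReal :=
        ENNReal.toReal_mono hfin hle
    _ = (ε * ‖v‖) * G := by
        rw [ENNReal.toReal_mul, ENNReal.coe_toReal, coe_nnnorm,
          Real.norm_eq_abs, abs_of_nonneg hnn, hGdef]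
    _ ≤ c * ‖v‖ := by nlinarith [norm_nonneg v]
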